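/- Let M be a map with flag set F and generators s0, s1, s2, and let r0, r1, r2 be the truncation generators on F × {0,1,2}. Then there exists a subgroup H of Γ(Tr(M)) whose orbits on F × {0,1,2} are exactly the three sets F × {0}, F × {1} and F × {2} if and only if M is regular. -/
import Mathlib

private def liftHom (F : Type*) : Equiv.Perm F →* Equiv.Perm (F × Fin 3) where
  toFun γ := Equiv.prodCongr γ (Equiv.refl _)
  map_one' := Equiv.ext fun p => by cases p; simp
  map_mul' a b := Equiv.ext fun p => by cases p; simp [Equiv.Perm.mul_apply]

/-- there exists a subgroup H of Γ(Tr(M)) whose orbits on F × {0,1,2} are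
exactly the three sets F × {0}, F × {1}, F × {2} if and only if M is regular. -/
theorem truncation_three_zero_quotient_iff_regular
    {F : Type*} [Fintype F] [Nonempty F]
    (s0 s1 s2 : Equiv.Perm F)
    (hs0i : s0 * s0 = 1) (hs0f : ∀ x, s0 x ≠ x)
    (hs1i : s1 * s1 = 1) (hs1f : ∀ x, s1 x ≠ x)
    (hs2i : s2 * s2 = 1) (hs2f : ∀ x, s2 x ≠ x)
    (hcomm : s0 * s2 = s2 * s0)
    (hs02i : (s0 * s2) * (s0 * s2) = 1) (hs02f : ∀ x, (s0 * s2) x ≠ x)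
    (htrans : ∀ x y : F, ∃ g ∈ Subgroup.closure ({s0, s1, s2} : Set (Equiv.Perm F)), g x = y)
    (r0 r1 r2 : Equiv.Perm (F × Fin 3))
    (hr0 : ∀ Φ : F, r0 (Φ, 0) = (s1 Φ, 0) ∧ r0 (Φ, 1) = (s0 Φ, 1) ∧ r0 (Φ, 2) = (s1 Φ, 2))
    (hr1 : ∀ Φ : F, r1 (Φ, 0) = (s2 Φ, 0) ∧ r1 (Φ, 1) = (Φ, 2) ∧ r1 (Φ, 2) = (Φ, 1))
    (hr2 : ∀ Φ : F, r2 (Φ, 0) = (Φ, 2) ∧ r2 (Φ, 1) = (s2 Φ, 1) ∧ r2 (Φ, 2) = (Φ, 0)) :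
    (∃ H : Subgroup (Equiv.Perm (F × Fin 3)),
      H ≤ Subgroup.centralizer ({r0, r1, r2} : Set (Equiv.Perm (F × Fin 3))) ∧
      ∀ x : F × Fin 3, MulAction.orbit (↥H) x = {p : F × Fin 3 | p.2 = x.2}) ↔
    (∀ x y : F, ∃ γ ∈ Subgroup.centralizer ({s0, s1, s2} : Set (Equiv.Perm F)), γ x = y) := by
  constructor
  · rintro ⟨H, hle, horb⟩ x y
    have hmem : ((y, (0 : Fin 3)) : F × Fin 3) ∈ MulAction.orbit (↥H) ((x, 0) : F × Fin 3) := by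
      rw [horb]; rfl
    obtain ⟨h, hh⟩ := hmem
    set g : Equiv.Perm (F × Fin 3) := (h : Equiv.Perm (F × Fin 3)) with hgdef
    have hh' : g (x, 0) = (y, 0) := hh
    have hg : ∀ p : F × Fin 3, (g p).2 = p.2 := by
      intro p
      have h1 : g p ∈ MulAction.orbit (↥H) p := ⟨h, rfl⟩
      rw [horb] at h1
      exact h1
    have hcent := hle h.2
    rw [Subgroup.mem_centralizer_iff] at hcent
    have hc0 : ∀ p, r0 (g p) = g (r0 p) := by
      intro p
      have := hcent r0 (by simp)
      rw [← Equiv.Perm.mul_apply, this, Equiv.Perm.mul_apply]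
    have hc1 : ∀ p, r1 (g p) = g (r1 p) := by
      intro p
      have := hcent r1 (by simp)
      rw [← Equiv.Perm.mul_apply, this, Equiv.Perm.mul_apply]
    have hc2 : ∀ p, r2 (g p) = g (r2 p) := by
      intro p
      have := hcent r2 (by simp)
      rw [← Equiv.Perm.mul_apply, this, Equiv.Perm.mul_apply]
    set γf : F → F := fun Φ => (g (Φ, 0)).1 with hγf
    have hg0 : ∀ Φ : F, g (Φ, 0) = (γf Φ, 0) := fun Φ => Prod.ext rfl (hg (Φ, 0))
    have hg2 : ∀ Φ : F, g (Φ, 2) = (γf Φ, 2) := by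
      intro Φ
      have := hc2 (Φ, 0)
      rw [hg0, (hr2 (γf Φ)).1, (hr2 Φ).1] at this
      exact this.symm
    have hg1 : ∀ Φ : F, g (Φ, 1) = (γf Φ, 1) := by
      intro Φ
      have := hc1 (Φ, 2)
      rw [hg2, (hr1 (γf Φ)).2.2, (hr1 Φ).2.2] at this
      exact this.symm
    have hs1c : ∀ Φ, s1 (γf Φ) = γf (s1 Φ) := by
      intro Φ
      have := hc0 (Φ, 0)
      rw [hg0, (hr0 (γf Φ)).1, (hr0 Φ).1, hg0] at this
      exact (Prod.ext_iff.mp this).1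
    have hs2c : ∀ Φ, s2 (γf Φ) = γf (s2 Φ) := by
      intro Φ
      have := hc1 (Φ, 0)
      rw [hg0, (hr1 (γf Φ)).1, (hr1 Φ).1, hg0] at this
      exact (Prod.ext_iff.mp this).1
    have hs0c : ∀ Φ, s0 (γf Φ) = γf (s0 Φ) := by
      intro Φ
      have := hc0 (Φ, 1)
      rw [hg1, (hr0 (γf Φ)).2.1, (hr0 Φ).2.1, hg1] at this
      exact (Prod.ext_iff.mp this).1
    have hinj : Function.Injective γf := by
      intro a b hab
      have : g (a, 0) = g (b, 0) := by rw [hg0, hg0, hab]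
      exact (Prod.ext_iff.mp (g.injective this)).1
    set γ : Equiv.Perm F := Equiv.ofBijective γf (Finite.injective_iff_bijective.mp hinj)
      with hγdef
    have hγapp : ∀ a, γ a = γf a := fun a => rfl
    refine ⟨γ, ?_, ?_⟩
    · rw [Subgroup.mem_centralizer_iff]
      intro s hs
      rcases hs with h' | h' | h' <;> subst h' <;>
        refine Equiv.ext fun a => ?_ <;>
        simp only [Equiv.Perm.mul_apply, hγapp]
      · exact hs0c a
      · exact hs1c a
      · exact hs2c a
    · show γf x = y
      rw [hγf]
      simp only [hh']
  · intro hreg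
    refine ⟨(Subgroup.centralizer ({s0, s1, s2} : Set (Equiv.Perm F))).map (liftHom F), ?_, ?_⟩
    · rintro g' hg'
      obtain ⟨γ, hγ, rfl⟩ := hg'
      simp only [SetLike.mem_coe, Subgroup.mem_centralizer_iff] at hγ ⊢
      have c0 : ∀ a, s0 (γ a) = γ (s0 a) := by
        intro a
        have := hγ s0 (by simp)
        rw [← Equiv.Perm.mul_apply, this, Equiv.Perm.mul_apply]
      have c1 : ∀ a, s1 (γ a) = γ (s1 a) := by
        intro a
        have := hγ s1 (by simp)
        rw [← Equiv.Perm.mul_apply, this, Equiv.Perm.mul_apply]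
      have c2 : ∀ a, s2 (γ a) = γ (s2 a) := by
        intro a
        have := hγ s2 (by simp)
        rw [← Equiv.Perm.mul_apply, this, Equiv.Perm.mul_apply]
      have hlift : ∀ (Φ : F) (i : Fin 3), (liftHom F γ) (Φ, i) = (γ Φ, i) := fun Φ i => rfl
      intro r hr
      rcases hr with rfl | rfl | rfl
      · refine Equiv.ext fun p => ?_
        obtain ⟨Φ, i⟩ := p
        fin_cases i
        · show r ((liftHom F γ) (Φ, 0)) = (liftHom F γ) (r (Φ, 0))
          rw [hlift, (hr0 (γ Φ)).1, (hr0 Φ).1, hlift, c1]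
        · show r ((liftHom F γ) (Φ, 1)) = (liftHom F γ) (r (Φ, 1))
          rw [hlift, (hr0 (γ Φ)).2.1, (hr0 Φ).2.1, hlift, c0]
        · show r ((liftHom F γ) (Φ, 2)) = (liftHom F γ) (r (Φ, 2))
          rw [hlift, (hr0 (γ Φ)).2.2, (hr0 Φ).2.2, hlift, c1]
      · refine Equiv.ext fun p => ?_
        obtain ⟨Φ, i⟩ := p
        fin_cases i
        · show r ((liftHom F γ) (Φ, 0)) = (liftHom F γ) (r (Φ, 0))
          rw [hlift, (hr1 (γ Φ)).1, (hr1 Φ).1, hlift, c2]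
        · show r ((liftHom F γ) (Φ, 1)) = (liftHom F γ) (r (Φ, 1))
          rw [hlift, (hr1 (γ Φ)).2.1, (hr1 Φ).2.1, hlift]
        · show r ((liftHom F γ) (Φ, 2)) = (liftHom F γ) (r (Φ, 2))
          rw [hlift, (hr1 (γ Φ)).2.2, (hr1 Φ).2.2, hlift]
      · refine Equiv.ext fun p => ?_
        obtain ⟨Φ, i⟩ := p
        fin_cases i
        · show r ((liftHom F γ) (Φ, 0)) = (liftHom F γ) (r (Φ, 0))
          rw [hlift, (hr2 (γ Φ)).1, (hr2 Φ).1, hlift]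
        · show r ((liftHom F γ) (Φ, 1)) = (liftHom F γ) (r (Φ, 1))
          rw [hlift, (hr2 (γ Φ)).2.1, (hr2 Φ).2.1, hlift, c2]
        · show r ((liftHom F γ) (Φ, 2)) = (liftHom F γ) (r (Φ, 2))
          rw [hlift, (hr2 (γ Φ)).2.2, (hr2 Φ).2.2, hlift]
    · rintro ⟨Φ, i⟩
      ext ⟨Ψ, j⟩
      simp only [Set.mem_setOf_eq]
      constructor
      · rintro ⟨⟨g', hg'⟩, he⟩
        obtain ⟨γ, hγ, rfl⟩ := hg'
        have : (liftHom F γ) (Φ, i) = (Ψ, j) := he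
        have : ((γ Φ, i) : F × Fin 3) = (Ψ, j) := this
        exact ((Prod.ext_iff.mp this).2).symm
      · intro hji
        obtain ⟨γ, hγ, hγx⟩ := hreg Φ Ψ
        refine ⟨⟨liftHom F γ, Subgroup.mem_map.mpr ⟨γ, hγ, rfl⟩⟩, ?_⟩
        show (liftHom F γ) (Φ, i) = (Ψ, j)
        show ((γ Φ, i) : F × Fin 3) = (Ψ, j)
        rw [hγx, hji]
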